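/- Let f ∈ ℤ[x] be a monic polynomial such that f(p) ∣ f(p^p) for every prime p (i.e., for all primes p ≥ 2). If f is not a power of x (that is, f(x) ≠ x^m for every nonnegative integer m), then the polynomial x − 1 divides f(x) in ℤ[x]. -/

import Mathlib

open Polynomial

private lemma st2_odd_tot : ∀ m : ℕ, ¬ 2 ∣ m → 0 < m → m ≤ m.totient ^ 2 := by
  intro m
  induction m using Nat.strong_induction_on with
  | _ m IH =>
    intro h2 hpos
    rcases eq_or_lt_of_le (Nat.one_le_iff_ne_zero.mpr (by omega) : 1 ≤ m) with h1 | h1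
    · simp [← h1]
    have hm1 : m ≠ 1 := by omega
    have hpprime : Nat.Prime m.minFac := Nat.minFac_prime hm1
    have hpdvd : m.minFac ∣ m := Nat.minFac_dvd m
    have hp2 : m.minFac ≠ 2 := fun h => h2 (h ▸ hpdvd)
    have hp3 : 3 ≤ m.minFac := by
      have := hpprime.two_le; omega
    have hm0 : m ≠ 0 := by omega
    set p := m.minFac with hp
    set a := m.factorization p with ha
    have hapos : 0 < a := hpprime.factorization_pos_of_dvd hm0 hpdvd
    have hsplit : p ^ a * (m / p ^ a) = m := Nat.ordProj_mul_ordCompl_eq_self m p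
    set m' := m / p ^ a with hm'
    have hndvd : ¬ p ∣ m' := Nat.not_dvd_ordCompl hpprime hm0
    have hm'0 : m' ≠ 0 := by
      intro h; rw [h, Nat.mul_zero] at hsplit; exact hm0 hsplit.symm
    have hm'lt : m' < m := by
      have hgt : 1 < p ^ a := by
        calc 1 < p := by omega
        _ ≤ p ^ a := Nat.le_self_pow (by omega) p
      have := Nat.pos_of_ne_zero hm'0
      calc m' = m' * 1 := (Nat.mul_one _).symm
      _ < m' * p ^ a := by exact Nat.mul_lt_mul_of_le_of_lt (le_refl _) hgt this
      _ = m := by rw [Nat.mul_comm]; exact hsplit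
    have h2m' : ¬ 2 ∣ m' := fun h => h2 (h.trans (hm' ▸ Nat.ordCompl_dvd m p))
    have IH' : m' ≤ m'.totient ^ 2 := IH m' hm'lt h2m' (Nat.pos_of_ne_zero hm'0)
    have hcop : Nat.Coprime (p ^ a) m' := Nat.Coprime.pow_left _ (hpprime.coprime_iff_not_dvd.mpr hndvd)
    have htot : m.totient = (p ^ a).totient * m'.totient := by
      rw [← hsplit]; exact Nat.totient_mul hcop
    have htpa : (p ^ a).totient = p ^ (a - 1) * (p - 1) := Nat.totient_prime_pow hpprime hapos
    have hkey : p ^ a ≤ (p ^ a).totient ^ 2 := by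
      rw [htpa, mul_pow]
      have h1' : p ≤ (p - 1) ^ 2 := by
        have h9 : (p-1)^2 = (p-1)*(p-1) := sq (p-1)
        have hpm : p - 1 + 1 = p := by omega
        nlinarith [Nat.sub_le p 1, hpm]
      calc p ^ a = p ^ (a - 1) * p := by
            rw [← pow_succ]; congr 1; omega
      _ ≤ (p ^ (a - 1)) ^ 2 * (p - 1) ^ 2 := by
          apply Nat.mul_le_mul _ h1'
          calc p ^ (a-1) = p ^ (a-1) * 1 := (Nat.mul_one _).symm
          _ ≤ p ^ (a-1) * p ^ (a-1) := Nat.mul_le_mul_left _ (Nat.one_le_two_pow.trans (Nat.pow_le_pow_left (by omega) _))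
          _ = (p ^ (a-1)) ^ 2 := (sq _).symm
    calc m = p ^ a * m' := hsplit.symm
    _ ≤ (p ^ a).totient ^ 2 * m'.totient ^ 2 := Nat.mul_le_mul hkey IH'
    _ = m.totient ^ 2 := by rw [htot, mul_pow]

private lemma st2_tot_bound (d : ℕ) (hd : 0 < d) : d ≤ 2 * d.totient ^ 2 := by
  obtain ⟨k, m, hm2, hdm⟩ := Nat.exists_eq_pow_mul_and_not_dvd (Nat.pos_iff_ne_zero.mp hd) 2 (by norm_num)
  subst hdm
  have hmpos : 0 < m := Nat.pos_of_ne_zero (by rintro rfl; exact hm2 (dvd_zero 2))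
  have hodd := st2_odd_tot m hm2 hmpos
  rcases Nat.eq_zero_or_pos k with rfl | hk
  · simpa using le_trans hodd (by nlinarith [Nat.totient_pos.mpr hmpos])
  have hcop : Nat.Coprime (2 ^ k) m := Nat.Coprime.pow_left _ ((Nat.prime_two).coprime_iff_not_dvd.mpr hm2)
  have htot : (2 ^ k * m).totient = (2 ^ k).totient * m.totient := Nat.totient_mul hcop
  have ht2 : (2 ^ k).totient = 2 ^ (k - 1) := by
    rw [Nat.totient_prime_pow Nat.prime_two hk]; simp
  rw [htot, ht2, mul_pow]
  have : 2 ^ k ≤ 2 * (2 ^ (k-1)) ^ 2 := by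
    rw [← pow_mul, ← pow_succ']
    apply Nat.pow_le_pow_right (by norm_num); omega
  calc 2 ^ k * m ≤ (2 * (2 ^ (k-1)) ^ 2) * m.totient ^ 2 := Nat.mul_le_mul this hodd
  _ = 2 * ((2 ^ (k-1)) ^ 2 * m.totient ^ 2) := by ring

private lemma st2_schur (g : Polynomial ℤ) (hmon : g.Monic) (hdeg : 1 ≤ g.natDegree)
    (ha : g.eval 0 ≠ 0) (B₀ : ℕ) :
    ∃ (n : ℤ) (q : ℕ), q.Prime ∧ B₀ < q ∧ (q:ℤ) ∣ g.eval n ∧ ¬ (q:ℤ) ∣ n := by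
  set a := g.eval 0 with haa
  have hF0 : (Nat.factorial B₀ : ℤ) ≠ 0 := Int.natCast_ne_zero.mpr (B₀.factorial_ne_zero)
  set F : ℤ := (Nat.factorial B₀ : ℤ) with hF
  set c : ℤ := a * a * F with hc
  have hc0 : c ≠ 0 := mul_ne_zero (mul_ne_zero ha ha) hF0
  set P : Polynomial ℤ := g.comp (C c * X) with hP
  have hPdeg : P.natDegree = g.natDegree := by
    rw [hP, natDegree_comp, natDegree_C_mul_X c hc0, mul_one]
  have hPne : ∀ v : ℤ, P - C v ≠ 0 := by
    intro v h
    have : P = C v := by linear_combination (norm := ring_nf) h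
    rw [this, natDegree_C] at hPdeg; omega
  have hfin : (({t | IsRoot (P - C 0) t} ∪ {t | IsRoot (P - C a) t}) ∪
      {t | IsRoot (P - C (-a)) t}).Finite :=
    Set.Finite.union (Set.Finite.union (finite_setOf_isRoot (hPne 0)) (finite_setOf_isRoot (hPne a)))
      (finite_setOf_isRoot (hPne (-a)))
  obtain ⟨t, ht⟩ := (Set.Finite.infinite_compl hfin).nonempty
  simp only [Set.mem_compl_iff, Set.mem_union, Set.mem_setOf_eq, IsRoot.def, eval_sub, eval_C,
    sub_eq_zero, not_or] at ht
  obtain ⟨⟨ht0, hta⟩, htna⟩ := ht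
  have hPt : P.eval t = g.eval (c * t) := by
    rw [hP, eval_comp, eval_mul, eval_C, eval_X]
  set n : ℤ := c * t with hn
  rw [hPt] at ht0 hta htna
  -- g(n) = a + n*s
  obtain ⟨s, hs⟩ : (n : ℤ) ∣ g.eval n - a := by
    have := g.sub_dvd_eval_sub n 0
    simpa using this
  have hgn : g.eval n = a + n * s := by linarith [hs]
  set z : ℤ := 1 + t * a * F * s with hz
  have hazgn : a * z = g.eval n := by rw [hgn, hz, hn, hc]; ring
  have hz1 : z ≠ 1 ∧ z ≠ -1 ∧ z ≠ 0 := by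
    refine ⟨fun h => hta ?_, fun h => htna ?_, fun h => ht0 ?_⟩ <;>
      rw [← hazgn] <;> rw [h] <;> ring
  have hz2 : 2 ≤ z.natAbs := by
    rcases hz1 with ⟨h1, h2, h0⟩
    rcases Int.natAbs_eq z with h | h <;> omega
  set q : ℕ := z.natAbs.minFac with hq
  have hqprime : q.Prime := Nat.minFac_prime (by omega)
  have hqz : (q : ℤ) ∣ z := by
    have h1 : (q:ℤ) ∣ (z.natAbs : ℤ) := Int.natCast_dvd_natCast.mpr (Nat.minFac_dvd _)
    exact h1.trans (Int.natAbs_dvd.mpr dvd_rfl)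
  have hqint : Prime (q:ℤ) := Nat.prime_iff_prime_int.mp hqprime
  have hqkey : ¬ (q:ℤ) ∣ t * a * F * s := by
    intro hdvd
    have h1 : (q:ℤ) ∣ 1 := by
      have h2 := dvd_sub hqz hdvd
      rw [show z - t*a*F*s = 1 by rw [hz]; ring] at h2
      exact h2
    have := Int.le_of_dvd one_pos h1
    have := hqprime.two_le
    omega
  have hqa : ¬ (q:ℤ) ∣ a := fun h => hqkey (h.trans ⟨t*F*s, by ring⟩)
  have hqt : ¬ (q:ℤ) ∣ t := fun h => hqkey (h.trans ⟨a*F*s, by ring⟩)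
  have hqF : ¬ (q:ℤ) ∣ F := fun h => hqkey (h.trans ⟨t*a*s, by ring⟩)
  refine ⟨n, q, hqprime, ?_, ?_, ?_⟩
  · by_contra hle
    push_neg at hle
    exact hqF (Int.natCast_dvd_natCast.mpr (Nat.dvd_factorial hqprime.pos hle))
  · rw [← hazgn]
    exact Dvd.dvd.mul_left hqz a
  · intro h
    rw [hn, hc] at h
    rcases (hqint.dvd_mul.mp h) with h' | h'
    · rcases (hqint.dvd_mul.mp h') with h'' | h''
      · exact hqa ((hqint.dvd_mul.mp h'').elim id id)
      · exact hqF h''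
    · exact hqt h'

private lemma st2_cycl_structure {q : ℕ} [Fact q.Prime] {m : ℕ} (hm : 0 < m) {y : ZMod q}
    (hy : (cyclotomic m (ZMod q)).IsRoot y) :
    orderOf y ∣ m ∧ ∀ r : ℕ, r.Prime → r ∣ m → r ≠ q → ¬ (orderOf y ∣ m / r) := by
  have hXm : cyclotomic m (ZMod q) ∣ X ^ m - 1 := by
    rw [← prod_cyclotomic_eq_X_pow_sub_one hm]
    exact Finset.dvd_prod_of_mem _ (Nat.mem_divisors_self m hm.ne')
  have hym : y ^ m = 1 := by
    obtain ⟨c, hc⟩ := hXm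
    have := congrArg (eval y) hc
    simp only [eval_mul, eval_sub, eval_pow, eval_X, eval_one, hy.eq_zero, zero_mul] at this
    linear_combination this
  refine ⟨orderOf_dvd_of_pow_eq_one hym, ?_⟩
  intro r hr hrm hrq hdvd
  set s := m / r with hsdef
  have hsr : s * r = m := Nat.div_mul_cancel hrm
  have hs1 : 0 < s := by
    rcases Nat.eq_zero_or_pos s with h | h
    · rw [h, zero_mul] at hsr; omega
    · exact h
  have hys : y ^ s = 1 := orderOf_dvd_iff_pow_eq_one.mp hdvd
  set Ψ : Polynomial (ZMod q) := ∑ i ∈ Finset.range r, (X ^ s) ^ i with hΨ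
  have hgeom : Ψ * (X ^ s - 1) = X ^ m - 1 := by
    rw [hΨ, geom_sum_mul, ← pow_mul, hsr]
  have hsub : s.divisors ⊆ m.divisors := by
    intro d hd
    rw [Nat.mem_divisors] at hd ⊢
    exact ⟨hd.1.trans ⟨r, hsr.symm⟩, hm.ne'⟩
  have hprod : (X ^ m - 1 : Polynomial (ZMod q)) =
      (∏ d ∈ m.divisors \ s.divisors, cyclotomic d (ZMod q)) * (X ^ s - 1) := by
    rw [← prod_cyclotomic_eq_X_pow_sub_one hm, ← prod_cyclotomic_eq_X_pow_sub_one hs1]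
    exact (Finset.prod_sdiff hsub).symm
  have hXs0 : (X ^ s - 1 : Polynomial (ZMod q)) ≠ 0 := by
    intro h
    have := congrArg (eval 0) h
    simp [zero_pow hs1.ne'] at this
  have hΨeq : Ψ = ∏ d ∈ m.divisors \ s.divisors, cyclotomic d (ZMod q) :=
    mul_right_cancel₀ hXs0 (by rw [hgeom, hprod])
  have hmem : m ∈ m.divisors \ s.divisors := by
    rw [Finset.mem_sdiff, Nat.mem_divisors, Nat.mem_divisors]
    refine ⟨⟨dvd_rfl, hm.ne'⟩, fun hcon => ?_⟩
    have := Nat.le_of_dvd hs1 hcon.1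
    have : s < m := Nat.div_lt_self hm hr.one_lt
    omega
  have hdvdΨ : cyclotomic m (ZMod q) ∣ Ψ := hΨeq ▸ Finset.dvd_prod_of_mem _ hmem
  obtain ⟨c, hc⟩ := hdvdΨ
  have := congrArg (eval y) hc
  simp only [hΨ, eval_finset_sum, eval_pow, eval_X, eval_mul, hy.eq_zero, zero_mul] at this
  rw [hys] at this
  simp only [one_pow, Finset.sum_const, Finset.card_range, nsmul_eq_mul, mul_one] at this
  have hq0 : ((r : ZMod q)) = 0 := this
  have := (ZMod.natCast_eq_zero_iff r q).mp hq0
  exact hrq ((Nat.prime_dvd_prime_iff_eq (Fact.out) hr).mp this).symm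

private lemma st2_root_decomp {q : ℕ} [Fact q.Prime] {m : ℕ} (hm : 0 < m) {y : ZMod q}
    (hy : (cyclotomic m (ZMod q)).IsRoot y) :
    0 < orderOf y ∧ orderOf y ∣ q - 1 ∧ ∃ t : ℕ, m = orderOf y * q ^ t := by
  obtain ⟨hdm, hD⟩ := st2_cycl_structure hm hy
  set d := orderOf y with hd
  have hd0 : d ≠ 0 := by
    rintro h
    rw [h] at hdm
    exact hm.ne' (Nat.eq_zero_of_zero_dvd hdm)
  have hy0 : y ≠ 0 := by
    intro h
    have h1 := pow_orderOf_eq_one y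
    rw [h] at h1
    rw [zero_pow (h ▸ hd0 : orderOf (0 : ZMod q) ≠ 0)] at h1
    exact zero_ne_one h1
  have hq2 : 2 ≤ q := (Fact.out : q.Prime).two_le
  -- orderOf y divides q - 1
  have hdq1 : d ∣ q - 1 := by
    have hu : IsUnit y := isUnit_iff_ne_zero.mpr hy0
    obtain ⟨u, hu⟩ := hu
    have h1 : orderOf u ∣ Fintype.card (ZMod q)ˣ := orderOf_dvd_card
    rw [ZMod.card_units q] at h1
    rwa [hd, ← hu, orderOf_units]
  have hqd : ¬ q ∣ d := by
    intro h
    have := Nat.le_of_dvd (by omega) (h.trans hdq1)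
    omega
  refine ⟨Nat.pos_of_ne_zero hd0, hdq1, ?_⟩
  set t := m.factorization q with ht
  have hm0 : m ≠ 0 := hm.ne'
  -- m ∣ d * q ^ t
  have h1 : m ∣ d * q ^ t := by
    rw [← Nat.factorization_le_iff_dvd hm0 (by positivity), Finsupp.le_def]
    intro p
    rcases eq_or_ne p q with rfl | hpq
    · rw [Nat.factorization_mul hd0 (by positivity), Finsupp.add_apply,
        (Fact.out : p.Prime).factorization_pow, Finsupp.single_apply]
      simp [ht]
    · rw [Nat.factorization_mul hd0 (by positivity), Finsupp.add_apply,
        (Fact.out : q.Prime).factorization_pow, Finsupp.single_apply, if_neg (fun h => hpq h.symm),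
        add_zero]
      by_contra hlt
      push_neg at hlt
      have hpsupp : p ∈ m.primeFactors := by
        rw [← Nat.support_factorization]
        exact Finsupp.mem_support_iff.mpr (by omega)
      have hpprime : p.Prime := Nat.prime_of_mem_primeFactors hpsupp
      have hpm : p ∣ m := Nat.dvd_of_mem_primeFactors hpsupp
      refine hD p hpprime hpm hpq ?_
      rw [← Nat.factorization_le_iff_dvd hd0 (by
          have := Nat.div_pos (Nat.le_of_dvd hm hpm) hpprime.pos
          omega), Finsupp.le_def]
      intro s
      rw [Nat.factorization_div hpm]
      rcases eq_or_ne s p with rfl | hsp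
      · rw [Finsupp.tsub_apply, hpprime.factorization, Finsupp.single_apply, if_pos rfl]
        have := (Nat.factorization_le_iff_dvd hd0 hm0).mpr hdm
        omega
      · rw [Finsupp.tsub_apply, hpprime.factorization, Finsupp.single_apply,
          if_neg (fun h => hsp h.symm), Nat.sub_zero]
        exact (Nat.factorization_le_iff_dvd hd0 hm0).mpr hdm s
  -- d * q ^ t ∣ m
  have h2 : d * q ^ t ∣ m := by
    refine Nat.Coprime.mul_dvd_of_dvd_of_dvd ?_ hdm (Nat.ordProj_dvd m q)
    exact ((Nat.Coprime.pow_left t ((Fact.out : q.Prime).coprime_iff_not_dvd.mpr hqd))).symm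
  exact ⟨t, (Nat.dvd_antisymm h1 h2)⟩

private def st2mu (B P n : ℕ) : ℕ := n.factorization.sum fun p a => a * B ^ (P - p)

private lemma st2mu_mul (B P : ℕ) {n m : ℕ} (hn : n ≠ 0) (hm : m ≠ 0) :
    st2mu B P (n * m) = st2mu B P n + st2mu B P m := by
  unfold st2mu
  rw [Nat.factorization_mul hn hm]
  exact Finsupp.sum_add_index' (fun a => by simp) (fun a b c => by ring)

private lemma st2mu_prime (B P : ℕ) {p : ℕ} (hp : p.Prime) : st2mu B P p = B ^ (P - p) := by
  unfold st2mu
  rw [hp.factorization, Finsupp.sum_single_index (by simp), one_mul]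

private lemma st2mu_prime_pow (B P : ℕ) {p : ℕ} (hp : p.Prime) (t : ℕ) :
    st2mu B P (p ^ t) = t * B ^ (P - p) := by
  unfold st2mu
  rw [hp.factorization_pow, Finsupp.sum_single_index (by simp)]

private lemma st2mu_one (B P : ℕ) : st2mu B P 1 = 0 := by
  unfold st2mu; simp

private lemma st2_mem_le_sum {S : Multiset ℕ} {e : ℕ} (he : e ∈ S) : e ≤ S.sum := by
  obtain ⟨S', rfl⟩ : ∃ S', S = e ::ₘ S' := ⟨S.erase e, (Multiset.cons_erase he).symm⟩
  rw [Multiset.sum_cons]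
  exact Nat.le_add_right e S'.sum

private lemma st2_root_of_dvd {q : ℕ} [Fact q.Prime] {m : ℕ} {x : ℤ}
    (h : (q:ℤ) ∣ (cyclotomic m ℤ).eval x) :
    (cyclotomic m (ZMod q)).IsRoot ((x : ZMod q)) := by
  have h1 : (cyclotomic m (ZMod q)).eval ((x : ZMod q)) =
      (((cyclotomic m ℤ).eval x : ℤ) : ZMod q) := by
    rw [← map_cyclotomic_int m (ZMod q)]
    have : ((x : ZMod q)) = (Int.castRingHom (ZMod q)) x := rfl
    rw [this, eval_map, eval₂_at_apply]
    rfl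
  rw [IsRoot.def, h1]
  exact_mod_cast (ZMod.intCast_zmod_eq_zero_iff_dvd _ q).mpr h

private lemma st2_endgame (k : ℕ) (S : Multiset ℕ) (hS2 : ∀ e ∈ S, 2 ≤ e)
    (hdvd : ∀ p : ℕ, p.Prime →
      (X ^ k * (S.map fun e => cyclotomic e ℤ).prod : Polynomial ℤ).eval (p:ℤ) ∣
      (X ^ k * (S.map fun e => cyclotomic e ℤ).prod : Polynomial ℤ).eval ((p:ℤ)^p)) :
    S = 0 := by
  by_contra hS0
  obtain ⟨e₀, he₀⟩ := Multiset.exists_mem_of_ne_zero hS0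
  set G : Polynomial ℤ := (S.map fun e => cyclotomic e ℤ).prod with hG
  set P : ℕ := S.sum with hP
  set B : ℕ := P + 2 with hB
  suffices h : ∀ N : ℕ, ∀ e ∈ S, st2mu B P e ≤ N → False by
    exact h (st2mu B P e₀) e₀ he₀ le_rfl
  intro N
  induction N using Nat.strong_induction_on with
  | _ N IH =>
    intro e he hμN
    have he2 : 2 ≤ e := hS2 e he
    have hePos : 0 < e := by omega
    have hnp : e.primeFactors.Nonempty := Nat.nonempty_primeFactors.mpr (by omega)
    set ℓ : ℕ := e.primeFactors.max' hnp with hℓ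
    have hℓmem : ℓ ∈ e.primeFactors := Finset.max'_mem _ _
    have hℓp : ℓ.Prime := Nat.prime_of_mem_primeFactors hℓmem
    have hℓe : ℓ ∣ e := Nat.dvd_of_mem_primeFactors hℓmem
    have hℓ2 : 2 ≤ ℓ := hℓp.two_le
    have hℓle : ℓ ≤ e := Nat.le_of_dvd hePos hℓe
    -- the evaluation Φ_e(ℓ) is > 1
    have hΦpos : 1 < (cyclotomic e ℤ).eval (ℓ:ℤ) := by
      have hcast : (((cyclotomic e ℤ).eval (ℓ:ℤ) : ℤ) : ℝ) = (cyclotomic e ℝ).eval ((ℓ:ℤ):ℝ) := by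
        rw [← map_cyclotomic_int e ℝ]
        have : (((ℓ:ℤ)) : ℝ) = (Int.castRingHom ℝ) (ℓ:ℤ) := rfl
        rw [this, eval_map, eval₂_at_apply]
        rfl
      have hq1 : (1:ℝ) < ((ℓ:ℤ):ℝ) := by exact_mod_cast (by exact_mod_cast hℓ2 : (1:ℤ) < (ℓ:ℤ))
      have hlt := sub_one_pow_totient_lt_cyclotomic_eval he2 hq1
      have hge : (1:ℝ) ≤ (((ℓ:ℤ):ℝ) - 1) ^ e.totient := by
        apply one_le_pow₀
        have : (2:ℝ) ≤ ((ℓ:ℤ):ℝ) := by exact_mod_cast (by exact_mod_cast hℓ2 : (2:ℤ) ≤ (ℓ:ℤ))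
        linarith
      have : (1:ℝ) < (((cyclotomic e ℤ).eval (ℓ:ℤ) : ℤ) : ℝ) := by
        rw [hcast]; linarith
      exact_mod_cast this
    set q : ℕ := ((cyclotomic e ℤ).eval (ℓ:ℤ)).toNat.minFac with hqdef
    have htoNat : (((cyclotomic e ℤ).eval (ℓ:ℤ)).toNat : ℤ) = (cyclotomic e ℤ).eval (ℓ:ℤ) :=
      Int.toNat_of_nonneg (by omega)
    have hq : q.Prime := Nat.minFac_prime (by omega)
    haveI : Fact q.Prime := ⟨hq⟩
    have hq2 : 2 ≤ q := hq.two_le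
    have hqdvd : (q:ℤ) ∣ (cyclotomic e ℤ).eval (ℓ:ℤ) := by
      rw [← htoNat]
      exact_mod_cast Int.natCast_dvd_natCast.mpr (Nat.minFac_dvd _)
    -- q does not divide ℓ
    have hqℓ : ¬ q ∣ ℓ := by
      intro hcon
      have hqeℓ : q = ℓ := (Nat.prime_dvd_prime_iff_eq hq hℓp).mp hcon
      have h1 : ((ℓ:ℤ) - 0) ∣ (cyclotomic e ℤ).eval (ℓ:ℤ) - (cyclotomic e ℤ).eval 0 :=
        sub_dvd_eval_sub _ _ _
      have h0 : (cyclotomic e ℤ).eval 0 = 1 := by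
        rw [← coeff_zero_eq_eval_zero, cyclotomic_coeff_zero ℤ (by omega)]
      rw [h0, sub_zero] at h1
      have h2 : (ℓ:ℤ) ∣ (1:ℤ) := by
        have h3 := dvd_sub (hqeℓ ▸ hqdvd) h1
        rwa [sub_sub_cancel] at h3
      have := Int.le_of_dvd one_pos h2
      omega
    -- ℓ is a root of cyclotomic e mod q
    set x₀ : ZMod q := (((ℓ:ℤ)) : ZMod q) with hx₀
    have hroot₀ : (cyclotomic e (ZMod q)).IsRoot x₀ := st2_root_of_dvd hqdvd
    obtain ⟨hd₀pos, hd₀q1, t₀, ht₀⟩ := st2_root_decomp hePos hroot₀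
    -- q does not divide e
    have hqe : ¬ q ∣ e := by
      intro hcon
      have hℓq : ℓ ≠ q := fun h => hqℓ (h ▸ dvd_rfl)
      have hℓd₀ : ℓ ∣ orderOf x₀ := by
        have h1 : ℓ ∣ orderOf x₀ * q ^ t₀ := ht₀ ▸ hℓe
        rcases (Nat.Prime.dvd_mul hℓp).mp h1 with h | h
        · exact h
        · exact absurd ((Nat.prime_dvd_prime_iff_eq hℓp hq).mp (hℓp.dvd_of_dvd_pow h)) hℓq
      have h2 : ℓ ≤ q - 1 := Nat.le_of_dvd (by omega) (hℓd₀.trans hd₀q1)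
      have h3 : q ≤ ℓ := Finset.le_max' _ q (Nat.mem_primeFactors.mpr ⟨hq, hcon, by omega⟩)
      omega
    have ht₀0 : t₀ = 0 := by
      by_contra h
      exact hqe (ht₀ ▸ Dvd.dvd.mul_left (dvd_pow_self q h) _)
    have hde : e = orderOf x₀ := by rw [ht₀, ht₀0, pow_zero, mul_one]
    have heq1 : e ∣ q - 1 := hde ▸ hd₀q1
    have heq : e < q := by
      have := Nat.le_of_dvd (by omega) heq1; omega
    -- apply the divisibility hypothesis at the prime ℓ
    have hdv := hdvd ℓ hℓp
    have hGℓ : (q:ℤ) ∣ G.eval (ℓ:ℤ) := by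
      have hmem : (cyclotomic e ℤ).eval (ℓ:ℤ) ∈ (S.map fun e => cyclotomic e ℤ).map (eval (ℓ:ℤ)) := by
        rw [Multiset.map_map]
        exact Multiset.mem_map_of_mem _ he
      rw [hG, eval_multiset_prod]
      exact hqdvd.trans (Multiset.dvd_prod hmem)
    have hqFℓℓ : (q:ℤ) ∣ (X ^ k * G).eval ((ℓ:ℤ)^ℓ) := by
      refine Dvd.dvd.trans ?_ hdv
      rw [eval_mul]
      exact Dvd.dvd.mul_left hGℓ _
    have hqi : Prime (q:ℤ) := Nat.prime_iff_prime_int.mp hq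
    have hqℓint : ¬ (q:ℤ) ∣ (ℓ:ℤ) := fun h => hqℓ (Int.natCast_dvd_natCast.mp h)
    have hGℓℓ : (q:ℤ) ∣ G.eval ((ℓ:ℤ)^ℓ) := by
      rw [eval_mul, eval_pow, eval_X] at hqFℓℓ
      rcases hqi.dvd_mul.mp hqFℓℓ with h | h
      · exact absurd (hqi.dvd_of_dvd_pow (hqi.dvd_of_dvd_pow h)) hqℓint
      · exact h
    obtain ⟨v, hvmem, hvdvd⟩ := hqi.exists_mem_multiset_dvd
      (by rw [hG, eval_multiset_prod] at hGℓℓ; exact hGℓℓ)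
    rw [Multiset.map_map] at hvmem
    obtain ⟨e', he'S, hve'⟩ := Multiset.mem_map.mp hvmem
    rw [← hve'] at hvdvd
    have he'2 : 2 ≤ e' := hS2 e' he'S
    have hrooty : (cyclotomic e' (ZMod q)).IsRoot (((ℓ:ℤ)^ℓ : ℤ) : ZMod q) :=
      st2_root_of_dvd hvdvd
    have hycast : ((((ℓ:ℤ)^ℓ : ℤ)) : ZMod q) = x₀ ^ ℓ := by rw [hx₀]; push_cast; ring
    rw [hycast] at hrooty
    obtain ⟨hypos, hyq1, t, ht⟩ := st2_root_decomp (by omega : 0 < e') hrooty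
    set m := e / ℓ with hm
    have hordy : orderOf (x₀ ^ ℓ) = m := by
      rw [orderOf_pow' x₀ (by omega : ℓ ≠ 0), ← hde, Nat.gcd_eq_right hℓe]
    rw [hordy] at ht
    -- measure comparison
    have hm0 : m ≠ 0 := by
      have : 0 < m := Nat.div_pos hℓle (by omega)
      omega
    have hem : ℓ * m = e := Nat.mul_div_cancel' hℓe
    have he'P : e' ≤ P := st2_mem_le_sum he'S
    have hμe : st2mu B P e = B ^ (P - ℓ) + st2mu B P m := by
      rw [← hem, st2mu_mul B P (by omega) hm0, st2mu_prime B P hℓp]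
    have hμe' : st2mu B P e' = st2mu B P m + t * B ^ (P - q) := by
      rw [ht, st2mu_mul B P hm0 (by positivity), st2mu_prime_pow B P hq t]
    have hkey : t * B ^ (P - q) < B ^ (P - ℓ) := by
      rcases Nat.eq_zero_or_pos t with rfl | htpos
      · simpa using Nat.pow_pos (a := B) (n := P - ℓ) (by omega)
      · have hqt : q ^ t ∣ e' := ht ▸ Dvd.dvd.mul_left dvd_rfl m
        have hqe' : q ∣ e' := (dvd_pow_self q htpos.ne').trans hqt
        have hqP : q ≤ P := le_trans (Nat.le_of_dvd (by omega) hqe') he'P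
        have htB : t < B := by
          have h1 : 2 ^ t ≤ q ^ t := Nat.pow_le_pow_left hq2 t
          have h2 : q ^ t ≤ e' := Nat.le_of_dvd (by omega) hqt
          have h3 : t < 2 ^ t := Nat.lt_two_pow_self
          omega
        have hℓq : ℓ < q := by omega
        have hBpos : 0 < B ^ (P - q) := by positivity
        calc t * B ^ (P - q) ≤ (B-1) * B ^ (P - q) := Nat.mul_le_mul_right _ (by omega)
        _ < B * B ^ (P - q) := by
            apply Nat.mul_lt_mul_of_lt_of_le (by omega) (le_refl _) hBpos
        _ = B ^ (P - q + 1) := by rw [pow_succ, Nat.mul_comm]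
        _ ≤ B ^ (P - ℓ) := Nat.pow_le_pow_right (by omega) (by omega)
    have hμlt : st2mu B P e' < st2mu B P e := by rw [hμe, hμe']; omega
    exact IH (st2mu B P e') (by omega) e' he'S le_rfl

private lemma st2_root_of_dvd' {q : ℕ} [Fact q.Prime] {P : Polynomial ℤ} {x : ℤ}
    (h : (q:ℤ) ∣ P.eval x) :
    (P.map (Int.castRingHom (ZMod q))).IsRoot ((x : ZMod q)) := by
  have h1 : (P.map (Int.castRingHom (ZMod q))).eval ((x : ZMod q)) = ((P.eval x : ℤ) : ZMod q) := by
    have : ((x : ZMod q)) = (Int.castRingHom (ZMod q)) x := rfl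
    rw [this, eval_map, eval₂_at_apply]
    rfl
  rw [IsRoot.def, h1]
  exact_mod_cast (ZMod.intCast_zmod_eq_zero_iff_dvd _ q).mpr h

private lemma st2_strip (L : ℕ) :
    ∀ n : ℕ, ∀ g : Polynomial ℤ, g.Monic → g.natDegree = n →
    ∃ (S : Multiset ℕ) (g₁ : Polynomial ℤ), g₁.Monic ∧ (∀ e ∈ S, 1 ≤ e ∧ e ∣ L) ∧
      g = (S.map fun e => cyclotomic e ℤ).prod * g₁ ∧
      ∀ e : ℕ, 1 ≤ e → e ∣ L → ¬ (cyclotomic e ℤ ∣ g₁) := by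
  intro n
  induction n using Nat.strong_induction_on with
  | _ n IH =>
    intro g hg hdeg
    by_cases hex : ∃ e : ℕ, 1 ≤ e ∧ e ∣ L ∧ cyclotomic e ℤ ∣ g
    · obtain ⟨e, he1, heL, g₂, hg₂⟩ := hex
      have hΦm : (cyclotomic e ℤ).Monic := cyclotomic.monic e ℤ
      have hg₂m : g₂.Monic := hΦm.of_mul_monic_left (hg₂ ▸ hg)
      have hdeg₂ : g₂.natDegree < n := by
        have h1 : g.natDegree = (cyclotomic e ℤ).natDegree + g₂.natDegree := by
          rw [hg₂, hΦm.natDegree_mul hg₂m]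
        rw [natDegree_cyclotomic] at h1
        have := Nat.totient_pos.mpr (by omega : 0 < e)
        omega
      obtain ⟨S₂, g₁, hm, hSe, hprod, hnd⟩ := IH _ hdeg₂ g₂ hg₂m rfl
      refine ⟨e ::ₘ S₂, g₁, hm, ?_, ?_, hnd⟩
      · intro e' he'
        rcases Multiset.mem_cons.mp he' with rfl | h
        · exact ⟨he1, heL⟩
        · exact hSe e' h
      · rw [Multiset.map_cons, Multiset.prod_cons, hg₂, hprod]; ring
    · push_neg at hex
      exact ⟨0, g, hg, by simp, by simp, fun e h1 h2 hdvd => hex e h1 h2 hdvd⟩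

private lemma st2_clear (u : Polynomial ℚ) :
    ∃ (s : ℤ) (A : Polynomial ℤ), s ≠ 0 ∧ A.map (Int.castRingHom ℚ) = C (s:ℚ) * u := by
  obtain ⟨b, hb⟩ := IsLocalization.integerNormalization_map_to_map (nonZeroDivisors ℤ) u
  refine ⟨(b : ℤ), IsLocalization.integerNormalization (nonZeroDivisors ℤ) u,
    nonZeroDivisors.coe_ne_zero b, ?_⟩
  rw [show Int.castRingHom ℚ = algebraMap ℤ ℚ by rfl, hb]
  have : ((b:ℤ) • u) = ((b:ℤ):ℚ) • u := (Int.cast_smul_eq_zsmul ℚ _ u).symm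
  rw [this, Polynomial.smul_eq_C_mul]

private lemma st2_bezout (L : ℕ) (hL : 0 < L) (g₁ : Polynomial ℤ)
    (hnd : ∀ e : ℕ, 1 ≤ e → e ∣ L → ¬ (cyclotomic e ℤ ∣ g₁)) :
    ∃ (A Bp : Polynomial ℤ) (Nb : ℤ), Nb ≠ 0 ∧ A * g₁ + Bp * (X ^ L - 1) = C Nb := by
  have hcop : IsCoprime (g₁.map (Int.castRingHom ℚ)) ((X : Polynomial ℚ) ^ L - 1) := by
    have hXL : ((X : Polynomial ℚ) ^ L - 1) = ∏ d ∈ L.divisors, cyclotomic d ℚ :=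
      (prod_cyclotomic_eq_X_pow_sub_one hL ℚ).symm
    rw [hXL]
    apply IsCoprime.prod_right
    intro d hd
    rw [Nat.mem_divisors] at hd
    have hd1 : 0 < d := Nat.pos_of_dvd_of_pos hd.1 hL
    have hirr : Irreducible (cyclotomic d ℚ) := cyclotomic.irreducible_rat hd1
    refine (hirr.coprime_iff_not_dvd.mpr ?_).symm
    rw [← map_cyclotomic_int d ℚ,
      Polynomial.map_dvd_map _ Int.cast_injective (cyclotomic.monic d ℤ)]
    exact hnd d hd1 hd.1
  obtain ⟨U, V, hUV⟩ := hcop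
  obtain ⟨sU, AU, hsU, hAU⟩ := st2_clear U
  obtain ⟨sV, AV, hsV, hAV⟩ := st2_clear V
  refine ⟨C sV * AU, C sU * AV, sU * sV, mul_ne_zero hsU hsV, ?_⟩
  apply Polynomial.map_injective (Int.castRingHom ℚ) Int.cast_injective
  rw [Polynomial.map_add, Polynomial.map_mul, Polynomial.map_mul, Polynomial.map_mul,
    Polynomial.map_mul, Polynomial.map_C, Polynomial.map_C, Polynomial.map_C,
    Polynomial.map_sub, Polynomial.map_pow, Polynomial.map_X, Polynomial.map_one,
    hAU, hAV]
  have hcs : ∀ z : ℤ, (Int.castRingHom ℚ) z = ((z:ℚ)) := fun z => rfl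
  rw [hcs, hcs, hcs]
  push_cast
  rw [map_mul]
  linear_combination (norm := ring_nf) (C ((sU:ℚ)) * C ((sV:ℚ))) * hUV

/-- If `f ∈ ℤ[x]` is monic and satisfies `f(p) ∣ f(p^p)` for every prime `p`,
and `f` is not a power of `x`, then `x - 1` divides `f` in `ℤ[x]`. -/
theorem stmt_2 (f : Polynomial ℤ) (hf : f.Monic)
    (hdvd : ∀ p : ℕ, p.Prime → f.eval (p : ℤ) ∣ f.eval ((p : ℤ) ^ p))
    (hpow : ∀ m : ℕ, f ≠ X ^ m) :
    (X - 1 : Polynomial ℤ) ∣ f := by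
  have hX1 : (X - 1 : Polynomial ℤ) = X - C 1 := by rw [map_one]
  rw [hX1, dvd_iff_isRoot]
  by_contra hc
  rw [IsRoot.def] at hc
  -- split off the power of X
  obtain ⟨g, hfg, hgnd⟩ := f.exists_eq_pow_rootMultiplicity_mul_and_not_dvd hf.ne_zero 0
  rw [map_zero, sub_zero] at hfg hgnd
  set k := rootMultiplicity 0 f with hk
  have hgm : g.Monic := (monic_X_pow k).of_mul_monic_left (hfg ▸ hf)
  have hg0 : g.eval 0 ≠ 0 := by
    rw [← coeff_zero_eq_eval_zero]
    exact fun h => hgnd (X_dvd_iff.mpr h)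
  have hf1 : f.eval 1 = g.eval 1 := by rw [hfg]; simp
  have hg1 : g.eval 1 ≠ 0 := fun h => hc (by rw [hf1, h])
  have hD : 1 ≤ g.natDegree := by
    by_contra h
    push_neg at h
    have h0 : g.natDegree = 0 := by omega
    have : g = 1 := hgm.natDegree_eq_zero.mp h0
    exact hpow k (by rw [hfg, this, mul_one])
  set D := g.natDegree with hDdef
  set L : ℕ := (2 * D ^ 2).factorial with hLdef
  have hLpos : 0 < L := Nat.factorial_pos _
  obtain ⟨S, g₁, hg₁m, hSe, hgprod, hnd⟩ := st2_strip L g.natDegree g hgm rfl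
  by_cases hone : g₁ = 1
  · -- endgame: g is a product of cyclotomics
    rw [hone, mul_one] at hgprod
    have hS2 : ∀ e ∈ S, 2 ≤ e := by
      intro e he
      obtain ⟨he1, -⟩ := hSe e he
      rcases eq_or_lt_of_le he1 with h1 | h1
      · exfalso
        apply hg1
        rw [hgprod, eval_multiset_prod]
        apply Multiset.prod_eq_zero
        have : (0:ℤ) = (cyclotomic e ℤ).eval 1 := by
          rw [← h1, cyclotomic_one]; simp
        rw [this, Multiset.map_map]
        exact Multiset.mem_map_of_mem _ he
      · omega
    have hS0 : S = 0 := by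
      apply st2_endgame k S hS2
      intro p hp
      rw [← hgprod, ← hfg]
      exact hdvd p hp
    rw [hS0] at hgprod
    simp at hgprod
    rw [hgprod] at hDdef
    simp at hDdef
    omega
  · -- main case
    have hg₁d : 1 ≤ g₁.natDegree := by
      by_contra h
      push_neg at h
      exact hone (hg₁m.natDegree_eq_zero.mp (by omega))
    have hg₁0 : g₁.eval 0 ≠ 0 := by
      intro h
      apply hg0
      rw [hgprod, eval_mul, h, mul_zero]
    obtain ⟨A, Bp, Nb, hNb, hbez⟩ := st2_bezout L hLpos g₁ hnd
    obtain ⟨n, q, hq, hqgt, hqg₁, hqn⟩ := st2_schur g₁ hg₁m hg₁d hg₁0 Nb.natAbs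
    haveI : Fact q.Prime := ⟨hq⟩
    have hq2 : 2 ≤ q := hq.two_le
    have hx0 : ((n : ZMod q)) ≠ 0 := fun h => hqn ((ZMod.intCast_zmod_eq_zero_iff_dvd n q).mp h)
    set x : ZMod q := ((n : ZMod q)) with hxdef
    set u : (ZMod q)ˣ := Units.mk0 x hx0 with hudef
    have hux : (u : ZMod q) = x := rfl
    set d := orderOf u with hddef
    have hd1 : 0 < d := orderOf_pos u
    have hdq1 : d ∣ q - 1 := by
      have h1 : orderOf u ∣ Fintype.card (ZMod q)ˣ := orderOf_dvd_card
      rwa [ZMod.card_units q] at h1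
    have hdle : d ≤ q - 1 := Nat.le_of_dvd (by omega) hdq1
    have hcopqd : Nat.Coprime q d := by
      refine hq.coprime_iff_not_dvd.mpr fun h => ?_
      have := Nat.le_of_dvd hd1 h
      omega
    haveI : NeZero (q * d) := ⟨by positivity⟩
    set σ := ZMod.chineseRemainder hcopqd with hσdef
    -- every u^r with r coprime to d is a root of g mod q
    have hroots : ∀ r : ℕ, r.Coprime d →
        ((g.map (Int.castRingHom (ZMod q))).IsRoot ((u ^ r : (ZMod q)ˣ) : ZMod q)) := by
      intro r hr
      set α := σ.symm ((n : ZMod q), (r : ZMod d)) with hα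
      have hαu : IsUnit α := by
        have h1 : IsUnit ((n : ZMod q), ((r:ℕ) : ZMod d)) := by
          obtain ⟨ua, hua⟩ : IsUnit (n : ZMod q) := isUnit_iff_ne_zero.mpr hx0
          obtain ⟨ub, hub⟩ : IsUnit ((r:ℕ) : ZMod d) := ⟨ZMod.unitOfCoprime r hr, rfl⟩
          refine ⟨⟨((ua:ZMod q), (ub:ZMod d)), ((↑ua⁻¹ : ZMod q), (↑ub⁻¹ : ZMod d)), ?_, ?_⟩, ?_⟩
          · show ((ua:ZMod q) * _, (ub:ZMod d) * _) = (1, 1)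
            rw [Units.mul_inv, Units.mul_inv]
          · show ((↑ua⁻¹ : ZMod q) * _, (↑ub⁻¹ : ZMod d) * _) = (1, 1)
            rw [Units.inv_mul, Units.inv_mul]
          · show ((ua:ZMod q), (ub:ZMod d)) = _
            rw [hua, hub]
        exact h1.map (σ.symm : ZMod q × ZMod d →+* ZMod (q*d))
      obtain ⟨p, hpgt, hpp, hpeq⟩ := Nat.forall_exists_prime_gt_and_eq_mod hαu 0
      have hσnat : ∀ m : ℕ, σ ((m : ZMod (q*d))) = ((m : ZMod q), (m : ZMod d)) := by
        intro m
        have h5 : σ ((m : ZMod (q*d))) = ((m : ZMod q × ZMod d)) :=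
          map_natCast (σ : ZMod (q*d) →+* ZMod q × ZMod d) m
        rw [h5]
        exact Prod.ext (Prod.fst_natCast m) (Prod.snd_natCast m)
      have hcomp : ((p : ZMod q), (p : ZMod d)) = ((n : ZMod q), ((r:ℕ) : ZMod d)) := by
        rw [← hσnat p, hpeq, hα, RingEquiv.apply_symm_apply]
      have hpq : ((p:ℕ) : ZMod q) = ((n:ℤ) : ZMod q) := congrArg Prod.fst hcomp
      have hpd : ((p:ℕ) : ZMod d) = ((r:ℕ) : ZMod d) := congrArg Prod.snd hcomp
      -- q ∣ g(p)
      have hmodint : (((p:ℕ):ℤ) : ZMod q) = ((n:ℤ) : ZMod q) := by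
        push_cast
        push_cast at hpq
        exact hpq
      have hdvdpn : (q:ℤ) ∣ ((p:ℕ):ℤ) - n := by
        rw [← ZMod.intCast_zmod_eq_zero_iff_dvd]
        push_cast
        push_cast at hmodint
        rw [hmodint]
        ring
      have hqgp : (q:ℤ) ∣ g.eval (((p:ℕ):ℤ)) := by
        have h1 : (((p:ℕ):ℤ) - n) ∣ g.eval (((p:ℕ):ℤ)) - g.eval n := sub_dvd_eval_sub _ _ _
        have h2 : (q:ℤ) ∣ g.eval n := by
          rw [hgprod, eval_mul]
          exact Dvd.dvd.mul_left hqg₁ _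
        have h3 := hdvdpn.trans h1
        have h4 := dvd_add h3 h2
        rwa [sub_add_cancel] at h4
      have hqfp : (q:ℤ) ∣ f.eval (((p:ℕ):ℤ)) := by
        rw [hfg, eval_mul]
        exact Dvd.dvd.mul_left hqgp _
      have hqfpp : (q:ℤ) ∣ f.eval ((((p:ℕ):ℤ)) ^ p) := hqfp.trans (hdvd p hpp)
      have hqi : Prime (q:ℤ) := Nat.prime_iff_prime_int.mp hq
      have hqnp : ¬ (q:ℤ) ∣ (((p:ℕ):ℤ)) := by
        intro h
        rw [← ZMod.intCast_zmod_eq_zero_iff_dvd] at h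
        push_cast at h
        rw [hpq] at h
        exact hx0 h
      have hqgpp : (q:ℤ) ∣ g.eval ((((p:ℕ):ℤ)) ^ p) := by
        rw [hfg, eval_mul, eval_pow, eval_X] at hqfpp
        rcases hqi.dvd_mul.mp hqfpp with h | h
        · exact absurd (hqi.dvd_of_dvd_pow (hqi.dvd_of_dvd_pow h)) hqnp
        · exact h
      have hroot := st2_root_of_dvd' hqgpp
      have hcast : (((((p:ℕ):ℤ)) ^ p : ℤ) : ZMod q) = ((u ^ p : (ZMod q)ˣ) : ZMod q) := by
        rw [Units.val_pow_eq_pow_val, hux, hxdef]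
        push_cast
        push_cast at hpq
        rw [hpq]
      rw [hcast] at hroot
      have hup : u ^ p = u ^ r := by
        rw [pow_eq_pow_iff_modEq]
        rw [← hddef]
        exact (ZMod.natCast_eq_natCast_iff p r d).mp hpd
      rwa [hup] at hroot
    -- counting roots : totient d ≤ D
    set gbar := g.map (Int.castRingHom (ZMod q)) with hgbar
    have hgbar0 : gbar ≠ 0 := (hgm.map _).ne_zero
    have hgbardeg : gbar.natDegree = D := by
      rw [hgbar, hgm.natDegree_map]
    set T : Finset (ZMod q) :=
      ((Finset.range d).filter (fun r => Nat.Coprime r d)).image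
        (fun r => ((u ^ r : (ZMod q)ˣ) : ZMod q)) with hT
    have hTcard : T.card = d.totient := by
      rw [hT, Finset.card_image_of_injOn, Nat.totient]
      · congr 1
        ext r
        simp only [Finset.mem_filter, Finset.mem_range]
        exact and_congr_right fun _ => ⟨Nat.Coprime.symm, Nat.Coprime.symm⟩
      · intro r₁ h₁ r₂ h₂ hval
        simp only [Finset.mem_coe, Finset.mem_filter, Finset.mem_range] at h₁ h₂
        have huu : u ^ r₁ = u ^ r₂ := Units.ext hval
        have := pow_eq_pow_iff_modEq.mp huu
        rw [← hddef] at this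
        unfold Nat.ModEq at this
        rw [Nat.mod_eq_of_lt h₁.1, Nat.mod_eq_of_lt h₂.1] at this
        exact this
    have hTsub : T ⊆ gbar.roots.toFinset := by
      intro v hv
      rw [hT, Finset.mem_image] at hv
      obtain ⟨r, hrmem, hrv⟩ := hv
      rw [Finset.mem_filter] at hrmem
      rw [Multiset.mem_toFinset, mem_roots hgbar0]
      exact hrv ▸ hroots r hrmem.2
    have htot : d.totient ≤ D := by
      calc d.totient = T.card := hTcard.symm
      _ ≤ gbar.roots.toFinset.card := Finset.card_le_card hTsub
      _ ≤ Multiset.card gbar.roots := gbar.roots.toFinset_card_le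
      _ ≤ gbar.natDegree := gbar.card_roots'
      _ = D := hgbardeg
    have hdL : d ∣ L := by
      apply Nat.dvd_factorial hd1
      calc d ≤ 2 * d.totient ^ 2 := st2_tot_bound d hd1
      _ ≤ 2 * D ^ 2 := by nlinarith [htot]
    -- n^L ≡ 1 mod q, so q divides Nb
    have huL : u ^ L = 1 := orderOf_dvd_iff_pow_eq_one.mp (hddef ▸ hdL)
    have hxL : x ^ L = 1 := by
      have := congrArg (Units.val) huL
      rwa [Units.val_pow_eq_pow_val, hux] at this
    have hqnL : (q:ℤ) ∣ n ^ L - 1 := by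
      rw [← ZMod.intCast_zmod_eq_zero_iff_dvd]
      push_cast
      rw [hxdef] at hxL
      rw [hxL]
      ring
    have hbezn : A.eval n * g₁.eval n + Bp.eval n * (n ^ L - 1) = Nb := by
      have := congrArg (eval n) hbez
      simpa using this
    have hqNb : (q:ℤ) ∣ Nb := by
      rw [← hbezn]
      exact dvd_add (Dvd.dvd.mul_left hqg₁ _) (Dvd.dvd.mul_left hqnL _)
    have : q ≤ Nb.natAbs := by
      apply Nat.le_of_dvd (Int.natAbs_pos.mpr hNb)
      exact Int.natAbs_natCast q ▸ Int.natAbs_dvd_natAbs.mpr hqNb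
    omega
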